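/- Let R be an integral domain and P a nonzero prime ideal of R. Then P is a molecule of R if and only if P is unit-cancellative. -/

import Mathlib

/-- A nonzero prime ideal of a domain is a molecule iff it is unit-cancellative. -/
theorem stmt_8 {R : Type*} [CommRing R] [IsDomain R] (P : Ideal R)
    (hne : P ≠ ⊥) (hP : P.IsPrime) :
    (∀ J K : Ideal R, P = J * K → J = ⊤ ∨ K = ⊤) ↔
      (∀ J : Ideal R, P = P * J → J = ⊤) := by
  constructor
  · intro h J hJ
    rcases h P J hJ with h1 | h2
    · exact absurd h1 hP.ne_top
    · exact h2
  · intro h J K hJK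
    have hle : J * K ≤ P := hJK.ge
    rcases hP.mul_le.mp hle with hJ | hK
    · have hJP : J = P := le_antisymm hJ (hJK ▸ Ideal.mul_le_left)
      right
      exact h K (by rw [hJP] at hJK; exact hJK)
    · have hKP : K = P := le_antisymm hK (hJK ▸ Ideal.mul_le_right)
      left
      exact h J (by rw [hKP, mul_comm] at hJK; exact hJK)
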